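/- Let S be a finite set of packets, each packet p having an integer release time r_p and integer deadline d_p with r_p ≤ d_p, and suppose there exists a schedule assigning each packet of S to a distinct integer time step σ(p) with r_p ≤ σ(p) ≤ d_p. Then the Earliest-Deadline-First assignment — at each time step, among pending unscheduled packets (those released by that step and not yet expired), schedule one with the smallest deadline — also schedules every packet of S by its deadline. -/

import Mathlib

/-- EDF feasibility (Theorem 4): if a finite set `S` of packets admits an
injective schedule `σ` within the release-deadline windows, then any run `τ`
of the Earliest-Deadline-First policy — injective, never scheduling a packet
before its release, never idling while a released packet is still unsent, and
always preferring smaller deadlines among pending packets — also sends every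
packet of `S` by its deadline. -/
theorem edf_feasibility {P : Type*} (S : Finset P) (r d : P → ℤ)
    (hrd : ∀ p ∈ S, r p ≤ d p)
    (hfeas : ∃ σ : P → ℤ, Set.InjOn σ S ∧ ∀ p ∈ S, r p ≤ σ p ∧ σ p ≤ d p)
    (τ : P → ℤ) (hτinj : Set.InjOn τ S)
    (hrel : ∀ p ∈ S, r p ≤ τ p)
    (hbusy : ∀ p ∈ S, ∀ s : ℤ, r p ≤ s → s < τ p → ∃ q ∈ S, τ q = s)
    (hedf : ∀ p ∈ S, ∀ q ∈ S, τ p < τ q → r q ≤ τ p → d p ≤ d q) :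
    ∀ p ∈ S, τ p ≤ d p := by
  classical
  obtain ⟨σ, hσinj, hσ⟩ := hfeas
  intro p hp
  by_contra hmiss
  push_neg at hmiss
  set t := τ p with ht
  -- "Good u" : every slot in [u, t] is occupied by a packet with deadline ≤ d p
  set Good : ℤ → Prop :=
    fun u => u ≤ t ∧ ∀ s, u ≤ s → s ≤ t → ∃ q ∈ S, τ q = s ∧ d q ≤ d p with hGoodDef
  have hGoodrp : Good (r p) := by
    refine ⟨hrel p hp, fun s h1 h2 => ?_⟩
    rcases lt_or_eq_of_le h2 with h2' | h2'
    · obtain ⟨q, hq, hτq⟩ := hbusy p hp s h1 h2'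
      refine ⟨q, hq, hτq, hedf q hq p hp (by omega) (by omega)⟩
    · exact ⟨p, hp, h2'.symm, le_refl _⟩
  -- any Good u satisfies a card bound, hence Good is bounded below
  have cardle : ∀ u : ℤ, Good u → (Finset.Icc u t).card ≤ S.card := by
    intro u hu
    have hu' : ∀ s : ℤ, ∃ q : P, (u ≤ s → s ≤ t → q ∈ S ∧ τ q = s ∧ d q ≤ d p) := by
      intro s
      by_cases h : u ≤ s ∧ s ≤ t
      · obtain ⟨q, hq1, hq2, hq3⟩ := hu.2 s h.1 h.2
        exact ⟨q, fun _ _ => ⟨hq1, hq2, hq3⟩⟩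
      · exact ⟨p, fun h1 h2 => absurd ⟨h1, h2⟩ h⟩
    choose f hf using hu'
    apply Finset.card_le_card_of_injOn f
    · intro s hs
      simp only [Finset.coe_Icc, Set.mem_Icc, Finset.mem_coe, Finset.mem_Icc] at hs ⊢
      exact (hf s hs.1 hs.2).1
    · intro s1 h1 s2 h2 he
      simp only [Finset.coe_Icc, Set.mem_Icc] at h1 h2
      have e1 := (hf s1 h1.1 h1.2).2.1
      have e2 := (hf s2 h2.1 h2.2).2.1
      rw [← e1, ← e2, he]
  have hbdd : ∀ u : ℤ, Good u → t + 1 - (S.card : ℤ) ≤ u := by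
    intro u hu
    have h1 := cardle u hu
    have h2 : (Finset.Icc u t).card = (t + 1 - u).toNat := Int.card_Icc u t
    have h3 := hu.1
    omega
  obtain ⟨u, huG, humin⟩ :=
    Int.exists_least_of_bdd (P := Good) ⟨t + 1 - (S.card : ℤ), hbdd⟩ ⟨r p, hGoodrp⟩
  -- every occupant of a slot in [u, t] is released no earlier than u
  have hrele : ∀ s, u ≤ s → s ≤ t → ∃ q ∈ S, τ q = s ∧ d q ≤ d p ∧ u ≤ r q := by
    intro s h1 h2
    obtain ⟨q, hq, hτq, hdq⟩ := huG.2 s h1 h2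
    refine ⟨q, hq, hτq, hdq, ?_⟩
    by_contra hr
    push_neg at hr
    obtain ⟨q', hq', hτq'⟩ := hbusy q hq (u - 1) (by omega) (by omega)
    have hdq' : d q' ≤ d q := hedf q' hq' q hq (by omega) (by omega)
    have : Good (u - 1) := by
      refine ⟨by omega, fun s' h1' h2' => ?_⟩
      rcases eq_or_lt_of_le h1' with h | h
      · exact ⟨q', hq', by omega, by omega⟩
      · exact huG.2 s' (by omega) h2'
    have := humin _ this
    omega
  -- pigeonhole: σ maps the occupants of [u, t] injectively into [u, d p]
  have hu2 : ∀ s : ℤ, ∃ q : P,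
      (u ≤ s → s ≤ t → q ∈ S ∧ τ q = s ∧ d q ≤ d p ∧ u ≤ r q) := by
    intro s
    by_cases h : u ≤ s ∧ s ≤ t
    · obtain ⟨q, hq1, hq2, hq3, hq4⟩ := hrele s h.1 h.2
      exact ⟨q, fun _ _ => ⟨hq1, hq2, hq3, hq4⟩⟩
    · exact ⟨p, fun h1 h2 => absurd ⟨h1, h2⟩ h⟩
  choose f hf using hu2
  have hcard2 : (Finset.Icc u t).card ≤ (Finset.Icc u (d p)).card := by
    apply Finset.card_le_card_of_injOn (fun s => σ (f s))
    · intro s hs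
      simp only [Finset.coe_Icc, Set.mem_Icc, Finset.mem_coe, Finset.mem_Icc] at hs ⊢
      obtain ⟨hfS, hfτ, hfd, hfr⟩ := hf s hs.1 hs.2
      have := hσ _ hfS
      constructor <;> omega
    · intro s1 h1 s2 h2 he
      simp only [Finset.coe_Icc, Set.mem_Icc] at h1 h2
      have e1 := hf s1 h1.1 h1.2
      have e2 := hf s2 h2.1 h2.2
      have : f s1 = f s2 := hσinj e1.1 e2.1 he
      rw [← e1.2.1, ← e2.2.1, this]
  have c1 : (Finset.Icc u t).card = (t + 1 - u).toNat := Int.card_Icc u t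
  have c2 : (Finset.Icc u (d p)).card = (d p + 1 - u).toNat := Int.card_Icc u (d p)
  have hut := huG.1
  omega
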